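/- For every integer n ≥ 3, the polynomial z ↦ P_n(1, z) has at least one nonzero root of multiplicity at most two; that is, there exists z₀ ∈ ℂ with z₀ ≠ 0, P_n(1, z₀) = 0, and either ∂_z P_n(1, z₀) ≠ 0 or ∂_z² P_n(1, z₀) ≠ 0. -/

import Mathlib

open scoped Nat

/-- The Gould–Hopper polynomial `P_n(t, z) = n! Σ_{k=0}^{⌊n/3⌋} (8t)^k z^{n-3k} / (k! (n-3k)!)`. -/
noncomputable def GH (n : ℕ) (t : ℝ) (z : ℂ) : ℂ :=
  (n ! : ℂ) * ∑ k ∈ Finset.range (n / 3 + 1),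
    ((8 * t : ℝ) : ℂ) ^ k * z ^ (n - 3 * k) / ((k ! : ℂ) * ((n - 3 * k)! : ℂ))

open Polynomial Finset

noncomputable def ghc (n k : ℕ) : ℂ := (n ! : ℂ) * 8 ^ k / ((k ! : ℂ) * ((n - 3 * k)! : ℂ))

noncomputable def ghP (n : ℕ) : Polynomial ℂ :=
  ∑ k ∈ range (n / 3 + 1), C (ghc n k) * X ^ (n - 3 * k)

lemma GH_eq (n : ℕ) (z : ℂ) : GH n 1 z = (ghP n).eval z := by
  simp only [GH, ghP, eval_finset_sum, eval_mul, eval_C, eval_pow, eval_X, Finset.mul_sum, ghc]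
  refine Finset.sum_congr rfl fun k _ => ?_
  push_cast
  ring

lemma termXD (a : ℂ) (e : ℕ) :
    X * derivative (C a * X ^ e) = C (e : ℂ) * (C a * X ^ e) := by
  cases e with
  | zero => simp
  | succ m =>
    rw [derivative_C_mul, derivative_X_pow]
    push_cast
    ring_nf

lemma termD3 (a : ℂ) (m : ℕ) :
    derivative (derivative (derivative (C a * X ^ (m + 3)))) =
      C (a * ((m+3) * (m+2) * (m+1))) * X ^ m := by
  simp only [derivative_C_mul, derivative_X_pow, Nat.add_sub_cancel,
    show m + 3 - 1 = m + 2 from rfl, show m + 2 - 1 = m + 1 from rfl,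
    show m + 1 - 1 = m from rfl, map_mul]
  push_cast
  ring

lemma termD3zero (a : ℂ) (e : ℕ) (he : e ≤ 2) :
    derivative (derivative (derivative (C a * X ^ e))) = 0 := by
  interval_cases e <;>
    simp [derivative_C_mul, derivative_X_pow, pow_one, derivative_X, derivative_one]

lemma ghc_spec (n j : ℕ) : ghc n j * ((j ! : ℂ) * ((n - 3 * j)! : ℂ)) = (n ! : ℂ) * 8 ^ j :=
  div_mul_cancel₀ _ (mul_ne_zero (Nat.cast_ne_zero.2 (Nat.factorial_ne_zero _))
    (Nat.cast_ne_zero.2 (Nat.factorial_ne_zero _)))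

lemma ghc_rec (n k : ℕ) (h : 3 * (k + 1) ≤ n) :
    24 * (ghc n k * ((((n - 3 * (k+1) : ℕ) : ℂ) + 3) * (((n - 3 * (k+1) : ℕ) : ℂ) + 2) *
      (((n - 3 * (k+1) : ℕ) : ℂ) + 1))) = ((3 * (k + 1) : ℕ) : ℂ) * ghc n (k + 1) := by
  set m := n - 3 * (k + 1) with hm
  have h1 : n - 3 * k = m + 3 := by omega
  set P : ℂ := ((m : ℂ) + 3) * ((m : ℂ) + 2) * ((m : ℂ) + 1) with hP
  have f3 : ((m + 3)! : ℂ) = P * (m ! : ℂ) := by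
    rw [hP, show m + 3 = (m+2)+1 from rfl, Nat.factorial_succ, show m + 2 = (m+1)+1 from rfl,
      Nat.factorial_succ, Nat.factorial_succ]
    push_cast; ring
  have fk : (((k+1))! : ℂ) = ((k:ℂ)+1) * (k ! : ℂ) := by
    rw [Nat.factorial_succ]; push_cast; ring
  have S1 := ghc_spec n k
  rw [h1, f3] at S1
  have S2 := ghc_spec n (k+1)
  rw [show n - 3 * (k+1) = m from rfl, fk] at S2
  have hb : (((k+1)! : ℂ)) * (((m+3)! : ℂ)) ≠ 0 :=
    mul_ne_zero (Nat.cast_ne_zero.2 (Nat.factorial_ne_zero _))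
      (Nat.cast_ne_zero.2 (Nat.factorial_ne_zero _))
  apply mul_right_cancel₀ hb
  rw [f3, fk]
  linear_combination (norm := (push_cast; ring)) (24 * P * ((k:ℂ)+1)) * S1 -
    (((3 * (k + 1) : ℕ) : ℂ) * P) * S2

lemma ode (n : ℕ) :
    C (24 : ℂ) * derivative (derivative (derivative (ghP n))) + X * derivative (ghP n) =
      C (n : ℂ) * ghP n := by
  have hdiv : 3 * (n / 3) ≤ n := by omega
  have hdiv' : n < 3 * (n / 3) + 3 := by omega
  unfold ghP
  rw [derivative_sum, derivative_sum, derivative_sum, Finset.mul_sum, Finset.mul_sum,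
    Finset.mul_sum]
  have h2 : ∑ k ∈ range (n / 3 + 1), X * derivative (C (ghc n k) * X ^ (n - 3 * k)) =
      ∑ k ∈ range (n / 3 + 1), C ((n - 3 * k : ℕ) : ℂ) * (C (ghc n k) * X ^ (n - 3 * k)) :=
    Finset.sum_congr rfl fun k _ => termXD _ _
  rw [h2]
  have h3 : ∑ k ∈ range (n / 3 + 1),
      C (24 : ℂ) * derivative (derivative (derivative (C (ghc n k) * X ^ (n - 3 * k)))) =
      ∑ k ∈ range (n / 3 + 1), C ((3 * k : ℕ) : ℂ) * (C (ghc n k) * X ^ (n - 3 * k)) := by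
    rw [Finset.sum_range_succ, Finset.sum_range_succ']
    have htop : derivative (derivative (derivative
        (C (ghc n (n / 3)) * X ^ (n - 3 * (n / 3))))) = 0 :=
      termD3zero _ _ (by omega)
    rw [htop, mul_zero, add_zero]
    have hzero : C ((3 * 0 : ℕ) : ℂ) * (C (ghc n 0) * X ^ (n - 3 * 0)) = 0 := by
      norm_num
    rw [hzero, add_zero]
    refine Finset.sum_congr rfl fun k hk => ?_
    have hk' : 3 * (k + 1) ≤ n := by
      have := Finset.mem_range.1 hk
      omega
    have hme : n - 3 * k = (n - 3 * (k + 1)) + 3 := by omega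
    rw [hme, termD3]
    simp only [← mul_assoc, ← C_mul]
    congr 1
    exact congrArg C (by linear_combination ghc_rec n k hk')
  rw [h3, ← Finset.sum_add_distrib]
  refine Finset.sum_congr rfl fun k hk => ?_
  have hk3 : 3 * k ≤ n := by
    have := Finset.mem_range.1 hk
    omega
  rw [← add_mul, ← C_add, Nat.cast_sub hk3]
  push_cast
  ring_nf

lemma ident (n : ℕ) (k : ℕ) :
    C (24 : ℂ) * derivative^[k+3] (ghP n) + X * derivative^[k+1] (ghP n) =
      C ((n : ℂ) - k) * derivative^[k] (ghP n) := by
  induction k with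
  | zero =>
    simpa using ode n
  | succ k ih =>
    have h := congrArg derivative ih
    simp only [derivative_add, derivative_mul, derivative_C, derivative_X, zero_mul, zero_add,
      one_mul] at h
    rw [← Function.iterate_succ_apply' derivative, ← Function.iterate_succ_apply' derivative,
      ← Function.iterate_succ_apply' derivative] at h
    have hc : ((n : ℂ) - (k + 1 : ℕ)) = ((n : ℂ) - k) - 1 := by push_cast; ring
    rw [hc, map_sub, map_one]
    linear_combination h

lemma triple_root_zero (n : ℕ) (w : ℂ) (h0 : (ghP n).eval w = 0)
    (h1 : (derivative (ghP n)).eval w = 0)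
    (h2 : (derivative (derivative (ghP n))).eval w = 0) : ghP n = 0 := by
  set p := ghP n with hp
  have key : ∀ k, (derivative^[k] p).eval w = 0 ∧ (derivative^[k+1] p).eval w = 0 ∧
      (derivative^[k+2] p).eval w = 0 := by
    intro k
    induction k with
    | zero =>
      refine ⟨by simpa using h0, by simpa using h1, ?_⟩
      simpa [Function.iterate_succ_apply'] using h2
    | succ k ih =>
      refine ⟨ih.2.1, ih.2.2, ?_⟩
      have h := congrArg (eval w) (ident n k)
      simp only [eval_add, eval_mul, eval_C, eval_X, ← hp, ih.1, ih.2.1, mul_zero, add_zero,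
        zero_add] at h
      have : (derivative^[k+3] p).eval w = 0 :=
        (mul_eq_zero.mp h).resolve_left (by norm_num)
      simpa [show k + 1 + 2 = k + 3 from rfl] using this
  have htay : Polynomial.taylor w p = 0 := by
    ext i
    rw [Polynomial.taylor_coeff, Polynomial.coeff_zero]
    have h0 := (key i).1
    have hfac := congrFun (Polynomial.factorial_smul_hasseDeriv (R := ℂ) i) p
    rw [LinearMap.smul_apply] at hfac
    rw [← hfac] at h0
    simp only [nsmul_eq_mul, eval_mul, eval_natCast] at h0
    exact (mul_eq_zero.mp h0).resolve_left
      (Nat.cast_ne_zero.2 (Nat.factorial_ne_zero i))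
  exact Polynomial.taylor_injective w (by rw [htay, map_zero])

lemma coeff_top (n : ℕ) (hn : 0 < n) : (ghP n).coeff n = 1 := by
  unfold ghP
  rw [finset_sum_coeff]
  rw [Finset.sum_eq_single 0]
  · simp only [Nat.mul_zero, Nat.sub_zero, coeff_C_mul, coeff_X_pow, if_pos rfl, if_true, mul_one]
    unfold ghc
    rw [Nat.mul_zero, Nat.sub_zero, pow_zero, Nat.factorial_zero, Nat.cast_one]
    have : ((n ! : ℂ)) ≠ 0 := Nat.cast_ne_zero.2 (Nat.factorial_ne_zero n)
    field_simp
  · intro k hk hk0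
    rw [coeff_C_mul, coeff_X_pow, if_neg, mul_zero]
    have := Finset.mem_range.1 hk
    omega
  · intro h
    exact absurd (Finset.mem_range.2 (Nat.succ_pos _)) h

lemma ghP_ne_zero (n : ℕ) (hn : 0 < n) : ghP n ≠ 0 := fun h => by
  have := coeff_top n hn
  rw [h, coeff_zero] at this
  exact one_ne_zero this.symm

lemma ghP_natDegree (n : ℕ) (hn : 0 < n) : (ghP n).natDegree = n := by
  refine le_antisymm ?_ (le_natDegree_of_ne_zero (by rw [coeff_top n hn]; exact one_ne_zero))
  unfold ghP
  refine natDegree_sum_le_of_forall_le _ _ fun k hk => ?_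
  exact (natDegree_C_mul_X_pow_le _ _).trans (Nat.sub_le _ _)

lemma ghP_card_roots (n : ℕ) (hn : 0 < n) : Multiset.card (ghP n).roots = n := by
  have h := (Polynomial.splits_iff_card_roots (f := ghP n)).mp (IsAlgClosed.splits _)
  rw [ghP_natDegree n hn] at h
  exact h

lemma ghP_mult_zero (n : ℕ) (hn : 0 < n) : rootMultiplicity 0 (ghP n) ≤ 2 := by
  by_contra hc
  push_neg at hc
  have hdvd : (X : Polynomial ℂ) ^ 3 ∣ ghP n := by
    have h1 := Polynomial.pow_rootMultiplicity_dvd (ghP n) 0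
    rw [map_zero, sub_zero] at h1
    exact dvd_trans (pow_dvd_pow X hc) h1
  obtain ⟨q, hq⟩ := hdvd
  have h0 : (ghP n).eval 0 = 0 := by simp [hq]
  have h1 : (derivative (ghP n)).eval 0 = 0 := by
    rw [hq]
    simp [derivative_mul, derivative_X_pow]
  have h2 : (derivative (derivative (ghP n))).eval 0 = 0 := by
    rw [hq]
    simp [derivative_mul, derivative_X_pow, derivative_add]
  exact ghP_ne_zero n hn (triple_root_zero n 0 h0 h1 h2)

theorem stmt14 (n : ℕ) (hn : 3 ≤ n) :
    ∃ z₀ : ℂ, z₀ ≠ 0 ∧ GH n 1 z₀ = 0 ∧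
      (deriv (GH n 1) z₀ ≠ 0 ∨ deriv (deriv (GH n 1)) z₀ ≠ 0) := by
  classical
  have hn0 : 0 < n := by omega
  have hGH : GH n 1 = fun z => (ghP n).eval z := funext fun z => GH_eq n z
  have hne : ghP n ≠ 0 := ghP_ne_zero n hn0
  have hcard : Multiset.card (ghP n).roots = n := ghP_card_roots n hn0
  have hcnt : (ghP n).roots.count 0 ≤ 2 := by
    rw [Polynomial.count_roots]
    exact ghP_mult_zero n hn0
  have hex : ∃ z ∈ (ghP n).roots, z ≠ 0 := by
    by_contra hco
    push_neg at hco
    have hcc := Multiset.count_eq_card.mpr fun b hb => (hco b hb).symm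
    rw [hcard] at hcc
    omega
  obtain ⟨z₀, hzr, hz0⟩ := hex
  have hroot : (ghP n).eval z₀ = 0 := Polynomial.isRoot_of_mem_roots hzr
  refine ⟨z₀, hz0, by rw [hGH]; exact hroot, ?_⟩
  by_contra hcon
  push_neg at hcon
  obtain ⟨e1, e2⟩ := hcon
  have hd1 : deriv (GH n 1) = fun z => (derivative (ghP n)).eval z := by
    rw [hGH]; funext z; exact Polynomial.deriv (p := ghP n)
  have hd2 : deriv (deriv (GH n 1)) = fun z => (derivative (derivative (ghP n))).eval z := by
    rw [hd1]; funext z; exact Polynomial.deriv (p := derivative (ghP n))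
  rw [hd1] at e1
  rw [hd2] at e2
  exact hne (triple_root_zero n z₀ hroot e1 e2)
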